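/- In the deformation of the proof of Lemma 2: let v₁v₂v₃ be a spherical isosceles triangle with |v₁v₂| = |v₁v₃| = s < π/3 and fixed apex angle α = ∠v₂v₁v₃. As s increases towards π/3 (with α fixed), the base angle ∠v₁v₂v₃ is strictly increasing in s. -/

import Mathlib

open scoped RealInnerProductSpace

/-- Geodesic (angular) distance between points of the unit sphere in `ℝ³`. -/
noncomputable def sdist (x y : EuclideanSpace ℝ (Fin 3)) : ℝ :=
  Real.arccos ⟪x, y⟫

/-- The convex cone spanned by three points (nonnegative combinations). -/
def scone (a b c : EuclideanSpace ℝ (Fin 3)) : Set (EuclideanSpace ℝ (Fin 3)) :=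
  {x | ∃ α β γ : ℝ, 0 ≤ α ∧ 0 ≤ β ∧ 0 ≤ γ ∧ x = α • a + β • b + γ • c}

/-- The closed spherical triangle with vertices `a`, `b`, `c`: the trace on the
unit sphere of the convex cone they span. -/
def sTri (a b c : EuclideanSpace ℝ (Fin 3)) : Set (EuclideanSpace ℝ (Fin 3)) :=
  {x | ‖x‖ = 1 ∧ x ∈ scone a b c}

/-- The (relative) interior of the spherical triangle `abc`: the trace on the
unit sphere of the interior of the cone spanned by `a`, `b`, `c`. -/
def sTriInt (a b c : EuclideanSpace ℝ (Fin 3)) : Set (EuclideanSpace ℝ (Fin 3)) :=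
  {x | ‖x‖ = 1 ∧ x ∈ interior (scone a b c)}

/-- The geodesic segment (minor arc) between unit vectors `a`, `b`: points of
the unit sphere that are nonnegative combinations of `a` and `b`. -/
def sSeg (a b : EuclideanSpace ℝ (Fin 3)) : Set (EuclideanSpace ℝ (Fin 3)) :=
  {x | ‖x‖ = 1 ∧ ∃ α β : ℝ, 0 ≤ α ∧ 0 ≤ β ∧ x = α • a + β • b}

/-- The interior angle of a spherical triangle at the unit vertex `b`, between
the geodesics towards `a` and towards `c`. -/
noncomputable def sAngle (a b c : EuclideanSpace ℝ (Fin 3)) : ℝ :=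
  InnerProductGeometry.angle (a - ⟪a, b⟫ • b) (c - ⟪c, b⟫ • b)

/-- `t₁ t₂ t₃` form the regular spherical triangle `T₀` of side length `π/3`:
unit vectors with pairwise inner products `cos (π/3) = 1/2`. -/
def RegT (t₁ t₂ t₃ : EuclideanSpace ℝ (Fin 3)) : Prop :=
  ‖t₁‖ = 1 ∧ ‖t₂‖ = 1 ∧ ‖t₃‖ = 1 ∧
    ⟪t₁, t₂⟫ = 1/2 ∧ ⟪t₁, t₃⟫ = 1/2 ∧ ⟪t₂, t₃⟫ = 1/2

/-- `v₁ v₂ v₃` is properly placed in the regular triangle `t₁ t₂ t₃`: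
`v₁ = t₁`, `v₂` lies on the segment `[t₁, t₂]`, and `v₃` lies inside the
spherical triangle `t₁ v₂ t₃`. -/
def ProperlyPlaced (t₁ t₂ t₃ v₁ v₂ v₃ : EuclideanSpace ℝ (Fin 3)) : Prop :=
  v₁ = t₁ ∧ v₂ ∈ sSeg t₁ t₂ ∧ v₃ ∈ sTriInt t₁ v₂ t₃

/-- A spherical triangle with side lengths `a = |v₁v₂|`, `b = |v₁v₃|`,
`c = |v₂v₃|` can be properly placed in the regular triangle `T₀`. -/
def Placeable (a b c : ℝ) : Prop :=
  ∃ t₁ t₂ t₃ v₁ v₂ v₃ : EuclideanSpace ℝ (Fin 3),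
    RegT t₁ t₂ t₃ ∧ ‖v₁‖ = 1 ∧ ‖v₂‖ = 1 ∧ ‖v₃‖ = 1 ∧
    sdist v₁ v₂ = a ∧ sdist v₁ v₃ = b ∧ sdist v₂ v₃ = c ∧
    ProperlyPlaced t₁ t₂ t₃ v₁ v₂ v₃

/-- For spherical isosceles triangles with fixed apex angle
`α ∈ (0, π)` and equal sides of length `s ∈ (0, π/3]`, the base angle is
strictly increasing in `s`: if `v₁ v₂ v₃` has sides `|v₁v₂| = |v₁v₃| = s` and
`w₁ w₂ w₃` has sides `|w₁w₂| = |w₁w₃| = s'` with `0 < s < s' ≤ π/3`, both with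
apex angle `α`, then the base angle of the first is smaller. -/
local notation "E" => EuclideanSpace ℝ (Fin 3)

lemma innerE_comm (x y : E) : ⟪x, y⟫ = ⟪y, x⟫ := real_inner_comm y x

lemma inner_proj_proj (b x y : E) (hb : ‖b‖ = 1) :
    ⟪x - ⟪x, b⟫ • b, y - ⟪y, b⟫ • b⟫ = ⟪x, y⟫ - ⟪x, b⟫ * ⟪y, b⟫ := by
  have hbb : ⟪b, b⟫ = 1 := by rw [real_inner_self_eq_norm_sq, hb]; norm_num
  simp only [inner_sub_left, inner_sub_right, real_inner_smul_left, real_inner_smul_right,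
    hbb, innerE_comm b x, innerE_comm b y]
  ring

lemma norm_proj (b x : E) (hb : ‖b‖ = 1) (hx : ‖x‖ = 1) :
    ‖x - ⟪x, b⟫ • b‖ = Real.sqrt (1 - ⟪x, b⟫ ^ 2) := by
  have h := inner_proj_proj b x x hb
  have hxx : ⟪x, x⟫ = 1 := by rw [real_inner_self_eq_norm_sq, hx]; norm_num
  rw [norm_eq_sqrt_real_inner, h, hxx]
  ring_nf

lemma cos_base (s α : ℝ) (hs₀ : 0 < s) (hs₁ : s < Real.pi / 2)
    (hα₀ : 0 < α) (hα₁ : α < Real.pi)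
    (v₁ v₂ v₃ : E) (h1 : ‖v₁‖ = 1) (h2 : ‖v₂‖ = 1) (h3 : ‖v₃‖ = 1)
    (d12 : sdist v₁ v₂ = s) (d13 : sdist v₁ v₃ = s)
    (ha : sAngle v₂ v₁ v₃ = α) :
    Real.cos (sAngle v₁ v₂ v₃) =
      Real.cos s * Real.sqrt (1 - Real.cos α) /
        Real.sqrt ((1 + Real.cos α) + Real.cos s ^ 2 * (1 - Real.cos α)) := by
  have hpi : (0:ℝ) < Real.pi := Real.pi_pos
  have hsπ : s < Real.pi := by linarith
  have hsin : 0 < Real.sin s := Real.sin_pos_of_pos_of_lt_pi hs₀ hsπ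
  have hcos : 0 < Real.cos s := Real.cos_pos_of_mem_Ioo ⟨by linarith, hs₁⟩
  -- inner products to v₁
  have hb12 : |⟪v₁, v₂⟫| ≤ 1 := by
    have := abs_real_inner_le_norm v₁ v₂; rwa [h1, h2, one_mul] at this
  have hb13 : |⟪v₁, v₃⟫| ≤ 1 := by
    have := abs_real_inner_le_norm v₁ v₃; rwa [h1, h3, one_mul] at this
  have A12 : ⟪v₁, v₂⟫ = Real.cos s := by
    rw [← d12]; unfold sdist
    exact (Real.cos_arccos (by linarith [abs_le.1 hb12]) (by linarith [(abs_le.1 hb12).2])).symm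
  have A13 : ⟪v₁, v₃⟫ = Real.cos s := by
    rw [← d13]; unfold sdist
    exact (Real.cos_arccos (by linarith [abs_le.1 hb13]) (by linarith [(abs_le.1 hb13).2])).symm
  set k := Real.cos α with hk
  have hmemα : α ∈ Set.Icc 0 Real.pi := ⟨hα₀.le, hα₁.le⟩
  have hk1 : k < 1 := by
    have := Real.strictAntiOn_cos (Set.mem_Icc.mpr ⟨le_refl 0, hpi.le⟩) hmemα hα₀
    simpa using this
  have hk2 : -1 < k := by
    have := Real.strictAntiOn_cos hmemα (Set.mem_Icc.mpr ⟨hpi.le, le_refl _⟩) hα₁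
    simpa using this
  have hnormproj : ∀ x : E, ‖x‖ = 1 → ⟪x, v₁⟫ = Real.cos s →
      ‖x - ⟪x, v₁⟫ • v₁‖ = Real.sin s := by
    intro x hx hix
    rw [norm_proj v₁ x h1 hx, hix, ← Real.sin_sq, Real.sqrt_sq hsin.le]
  -- the apex relation
  have hC : ⟪v₂, v₃⟫ = Real.cos s ^ 2 + Real.sin s ^ 2 * k := by
    have hcosa := congrArg Real.cos ha
    unfold sAngle at hcosa
    rw [InnerProductGeometry.cos_angle, inner_proj_proj v₁ v₂ v₃ h1,
      hnormproj v₂ h2 (by rw [innerE_comm]; exact A12),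
      hnormproj v₃ h3 (by rw [innerE_comm]; exact A13),
      innerE_comm v₂ v₁, innerE_comm v₃ v₁, A12, A13] at hcosa
    have hne : Real.sin s * Real.sin s ≠ 0 := by positivity
    rw [div_eq_iff hne] at hcosa
    rw [← hk] at hcosa
    linear_combination hcosa
  set C := ⟪v₂, v₃⟫ with hCdef
  set D := (1 + k) + Real.cos s ^ 2 * (1 - k) with hD
  have hDpos : 0 < D := by nlinarith
  have hm : (0:ℝ) < 1 - k := by linarith
  have hsplit : 1 - C ^ 2 = (Real.sin s ^ 2 * (1 - k)) * D := by
    rw [hC, hD, Real.sin_sq]; ring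
  -- compute the base angle cosine
  unfold sAngle
  rw [InnerProductGeometry.cos_angle, inner_proj_proj v₂ v₁ v₃ h2,
    norm_proj v₂ v₁ h2 h1, norm_proj v₂ v₃ h2 h3,
    A12, A13, innerE_comm v₃ v₂, ← hCdef, hC]
  have e1 : Real.sqrt (1 - Real.cos s ^ 2) = Real.sin s := by
    rw [← Real.sin_sq, Real.sqrt_sq hsin.le]
  have e2 : Real.sqrt (1 - (Real.cos s ^ 2 + Real.sin s ^ 2 * k) ^ 2)
      = Real.sin s * (Real.sqrt (1 - k) * Real.sqrt D) := by
    have : 1 - (Real.cos s ^ 2 + Real.sin s ^ 2 * k) ^ 2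
        = (Real.sin s ^ 2 * (1 - k)) * D := by rw [← hC]; exact hsplit
    rw [this, Real.sqrt_mul (by positivity), Real.sqrt_mul (by positivity),
      Real.sqrt_sq hsin.le]
    ring
  rw [e1, e2]
  have hsm : 0 < Real.sqrt (1 - k) := Real.sqrt_pos.mpr hm
  have hsD : 0 < Real.sqrt D := Real.sqrt_pos.mpr hDpos
  have hmm : Real.sqrt (1 - k) * Real.sqrt (1 - k) = 1 - k := Real.mul_self_sqrt hm.le
  have hnum : Real.cos s - Real.cos s * (Real.cos s ^ 2 + Real.sin s ^ 2 * k)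
      = Real.cos s * Real.sin s ^ 2 * (1 - k) := by rw [Real.sin_sq]; ring
  rw [hnum, div_eq_div_iff (by positivity) hsD.ne']
  linear_combination (-(Real.cos s * Real.sin s ^ 2 * Real.sqrt D)) * hmm

lemma gmono (m p a a' : ℝ) (hm : 0 < m) (hp : 0 < p) (ha' : 0 < a') (haa : a' < a) :
    a' * Real.sqrt m / Real.sqrt (p + a' ^ 2 * m) <
      a * Real.sqrt m / Real.sqrt (p + a ^ 2 * m) := by
  have hD : 0 < p + a ^ 2 * m := by positivity
  have hD' : 0 < p + a' ^ 2 * m := by positivity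
  have h1 : 0 < Real.sqrt (p + a ^ 2 * m) := Real.sqrt_pos.mpr hD
  have h2 : 0 < Real.sqrt (p + a' ^ 2 * m) := Real.sqrt_pos.mpr hD'
  have hsm : 0 < Real.sqrt m := Real.sqrt_pos.mpr hm
  rw [div_lt_div_iff₀ h2 h1]
  have key : a' * Real.sqrt (p + a ^ 2 * m) < a * Real.sqrt (p + a' ^ 2 * m) := by
    have hsq : (a' * Real.sqrt (p + a ^ 2 * m)) ^ 2
        < (a * Real.sqrt (p + a' ^ 2 * m)) ^ 2 := by
      rw [mul_pow, mul_pow, Real.sq_sqrt hD.le, Real.sq_sqrt hD'.le]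
      have haa2 : a' ^ 2 < a ^ 2 := by nlinarith
      nlinarith [mul_pos hp (sub_pos.mpr haa2)]
    exact lt_of_pow_lt_pow_left₀ 2 (mul_nonneg (by linarith) h2.le) hsq
  nlinarith [mul_lt_mul_of_pos_left key hsm]

theorem isosceles_base_angle_strict_mono
    (α s s' : ℝ) (hα₀ : 0 < α) (hα₁ : α < Real.pi)
    (hs₀ : 0 < s) (hss' : s < s') (hs' : s' ≤ Real.pi / 3)
    (v₁ v₂ v₃ w₁ w₂ w₃ : EuclideanSpace ℝ (Fin 3))
    (hv₁ : ‖v₁‖ = 1) (hv₂ : ‖v₂‖ = 1) (hv₃ : ‖v₃‖ = 1)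
    (hw₁ : ‖w₁‖ = 1) (hw₂ : ‖w₂‖ = 1) (hw₃ : ‖w₃‖ = 1)
    (hvs : sdist v₁ v₂ = s) (hvs' : sdist v₁ v₃ = s)
    (hws : sdist w₁ w₂ = s') (hws' : sdist w₁ w₃ = s')
    (hva : sAngle v₂ v₁ v₃ = α) (hwa : sAngle w₂ w₁ w₃ = α) :
    sAngle v₁ v₂ v₃ < sAngle w₁ w₂ w₃ := by
  have hpi : (0:ℝ) < Real.pi := Real.pi_pos
  have hs'₀ : 0 < s' := hs₀.trans hss'
  have hs'2 : s' < Real.pi / 2 := lt_of_le_of_lt hs' (by linarith)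
  have hs2 : s < Real.pi / 2 := by linarith
  have hcv := cos_base s α hs₀ hs2 hα₀ hα₁ v₁ v₂ v₃ hv₁ hv₂ hv₃ hvs hvs' hva
  have hcw := cos_base s' α hs'₀ hs'2 hα₀ hα₁ w₁ w₂ w₃ hw₁ hw₂ hw₃ hws hws' hwa
  have hmemα : α ∈ Set.Icc 0 Real.pi := ⟨hα₀.le, hα₁.le⟩
  have hk1 : Real.cos α < 1 := by
    have := Real.strictAntiOn_cos (Set.mem_Icc.mpr ⟨le_refl 0, hpi.le⟩) hmemα hα₀
    simpa using this
  have hk2 : -1 < Real.cos α := by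
    have := Real.strictAntiOn_cos hmemα (Set.mem_Icc.mpr ⟨hpi.le, le_refl _⟩) hα₁
    simpa using this
  have hcoss' : 0 < Real.cos s' := Real.cos_pos_of_mem_Ioo ⟨by linarith, hs'2⟩
  have hcc : Real.cos s' < Real.cos s :=
    Real.strictAntiOn_cos ⟨hs₀.le, by linarith⟩ ⟨hs'₀.le, by linarith⟩ hss'
  have hlt : Real.cos (sAngle w₁ w₂ w₃) < Real.cos (sAngle v₁ v₂ v₃) := by
    rw [hcv, hcw]
    exact gmono (1 - Real.cos α) (1 + Real.cos α) (Real.cos s) (Real.cos s')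
      (by linarith) (by linarith) hcoss' hcc
  have mv : sAngle v₁ v₂ v₃ ∈ Set.Icc 0 Real.pi := by
    unfold sAngle
    exact ⟨InnerProductGeometry.angle_nonneg _ _, InnerProductGeometry.angle_le_pi _ _⟩
  have mw : sAngle w₁ w₂ w₃ ∈ Set.Icc 0 Real.pi := by
    unfold sAngle
    exact ⟨InnerProductGeometry.angle_nonneg _ _, InnerProductGeometry.angle_le_pi _ _⟩
  exact (Real.strictAntiOn_cos.lt_iff_gt mw mv).mp hlt
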